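/- For any two lagrangian subspaces L and L₀ of a finite-dimensional symplectic vector space V, there exists a lagrangian subspace Q transversal to both L and L₀. -/

import Mathlib

open Module

/-- For any two lagrangian subspaces `L` and `L₀` of a `2n`-dimensional real symplectic
vector space `(V, ω)`, there exists a lagrangian subspace `Q` transversal to both. -/
theorem exists_common_transversal_lagrangian (n : ℕ)
    (V : Type*) [AddCommGroup V] [Module ℝ V] [FiniteDimensional ℝ V]
    (hdim : Module.finrank ℝ V = 2 * n)
    (ω : LinearMap.BilinForm ℝ V) (halt : ∀ x, ω x x = 0) (hnd : ω.Nondegenerate)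
    (L L₀ : Submodule ℝ V)
    (hL : (∀ x ∈ L, ∀ y ∈ L, ω x y = 0) ∧ Module.finrank ℝ L = n)
    (hL₀ : (∀ x ∈ L₀, ∀ y ∈ L₀, ω x y = 0) ∧ Module.finrank ℝ L₀ = n) :
    ∃ Q : Submodule ℝ V,
      ((∀ x ∈ Q, ∀ y ∈ Q, ω x y = 0) ∧ Module.finrank ℝ Q = n) ∧
      Q ⊓ L = ⊥ ∧ Q ⊓ L₀ = ⊥ := by
  classical
  have halt' : ω.IsAlt := halt
  have hrefl : ω.IsRefl := halt'.isRefl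
  -- helper: a subspace not contained in either of two subspaces has a point avoiding both
  have avoid : ∀ (S A B : Submodule ℝ V), ¬ S ≤ A → ¬ S ≤ B →
      ∃ x ∈ S, x ∉ A ∧ x ∉ B := by
    intro S A B hA hB
    obtain ⟨a, haS, haA⟩ := SetLike.not_le_iff_exists.mp hA
    obtain ⟨b, hbS, hbB⟩ := SetLike.not_le_iff_exists.mp hB
    by_cases haB : a ∈ B
    · by_cases hbA : b ∈ A
      · refine ⟨a + b, S.add_mem haS hbS, fun h => haA ?_, fun h => hbB ?_⟩
        · have := A.sub_mem h hbA; simpa using this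
        · have := B.sub_mem h haB; simpa using this
      · exact ⟨b, hbS, hbA, hbB⟩
    · exact ⟨a, haS, haA, haB⟩
  have key : ∀ k, k ≤ n → ∃ Q : Submodule ℝ V,
      (∀ x ∈ Q, ∀ y ∈ Q, ω x y = 0) ∧ Module.finrank ℝ Q = k ∧ Q ⊓ L = ⊥ ∧ Q ⊓ L₀ = ⊥ := by
    intro k
    induction k with
    | zero =>
      intro _
      exact ⟨⊥, by simp, by simp, by simp, by simp⟩
    | succ k ih =>
      intro hk
      obtain ⟨Q, hQiso, hQrank, hQL, hQL₀⟩ := ih (Nat.le_of_succ_le hk)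
      set S := ω.orthogonal Q with hS
      have hSrank : finrank ℝ S = 2 * n - k := by
        rw [hS, LinearMap.BilinForm.finrank_orthogonal hnd, hdim, hQrank]
      -- S is not contained in Q ⊔ M for M isotropic of dim n with Q ⊓ M = ⊥
      have hgen : ∀ (M : Submodule ℝ V), (∀ x ∈ M, ∀ y ∈ M, ω x y = 0) →
          Module.finrank ℝ M = n → Q ⊓ M = ⊥ → ¬ S ≤ Q ⊔ M := by
        intro M hMiso hMrank hQM hle
        have h1 : S ⊓ M ≤ Q := by
          intro x hx
          have hxS : x ∈ S := hx.1
          have hxM : x ∈ M := hx.2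
          have hxo : x ∈ ω.orthogonal S := by
            rw [LinearMap.BilinForm.mem_orthogonal_iff]
            intro y hy
            obtain ⟨q, hq, m, hm, rfl⟩ := Submodule.mem_sup.mp (hle hy)
            have h2 : ω q x = 0 := hxS q hq
            have h3 : ω m x = 0 := hMiso m hm x hxM
            show ω (q + m) x = 0
            simp [map_add, LinearMap.add_apply, h2, h3]
          rwa [hS, LinearMap.BilinForm.orthogonal_orthogonal hnd hrefl] at hxo
        have h2 : S ⊓ M = ⊥ := by
          rw [← le_bot_iff, ← hQM]
          exact le_inf h1 inf_le_right
        have h3 := Submodule.finrank_sup_add_finrank_inf_eq S M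
        rw [h2, finrank_bot, hSrank, hMrank] at h3
        have h4 : finrank ℝ (S ⊔ M : Submodule ℝ V) ≤ 2 * n :=
          hdim ▸ Submodule.finrank_le _
        omega
      obtain ⟨x, hxS, hxL, hxL₀⟩ := avoid S (Q ⊔ L) (Q ⊔ L₀)
        (hgen L hL.1 hL.2 hQL) (hgen L₀ hL₀.1 hL₀.2 hQL₀)
      have hxQ : x ∉ Q := fun h => hxL (le_sup_left (a := Q) (b := L) h)
      have hx0 : x ≠ 0 := fun h => hxQ (h ▸ Q.zero_mem)
      -- the orthogonality facts
      have hqx : ∀ q ∈ Q, ω q x = 0 := fun q hq => hxS q hq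
      have hxq : ∀ q ∈ Q, ω x q = 0 := fun q hq => hrefl q x (hqx q hq)
      refine ⟨Q ⊔ Submodule.span ℝ {x}, ?_, ?_, ?_, ?_⟩
      · -- isotropic
        intro a ha b hb
        obtain ⟨q, hq, a', ha', rfl⟩ := Submodule.mem_sup.mp ha
        obtain ⟨q', hq', b', hb', rfl⟩ := Submodule.mem_sup.mp hb
        obtain ⟨c, rfl⟩ := Submodule.mem_span_singleton.mp ha'
        obtain ⟨d, rfl⟩ := Submodule.mem_span_singleton.mp hb'
        have e1 : ω q q' = 0 := hQiso q hq q' hq'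
        have e2 : ω q x = 0 := hqx q hq
        have e3 : ω x q' = 0 := hxq q' hq'
        have e4 : ω x x = 0 := halt x
        simp [map_add, map_smul, LinearMap.add_apply, LinearMap.smul_apply,
          e1, e2, e3, e4]
      · -- rank
        have hinf : Q ⊓ Submodule.span ℝ {x} = ⊥ := by
          rw [eq_bot_iff]
          rintro y ⟨hyQ, hys⟩
          obtain ⟨c, rfl⟩ := Submodule.mem_span_singleton.mp hys
          rcases eq_or_ne c 0 with rfl | hc
          · simp
          · exfalso
            apply hxQ
            have := Q.smul_mem c⁻¹ hyQ
            rwa [smul_smul, inv_mul_cancel₀ hc, one_smul] at this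
        have h3 := Submodule.finrank_sup_add_finrank_inf_eq Q (Submodule.span ℝ {x})
        rw [hinf, finrank_bot, hQrank, finrank_span_singleton hx0] at h3
        omega
      · -- transversal to L
        rw [eq_bot_iff]
        rintro y ⟨hyQ', hyL⟩
        obtain ⟨q, hq, a', ha', rfl⟩ := Submodule.mem_sup.mp hyQ'
        obtain ⟨c, rfl⟩ := Submodule.mem_span_singleton.mp ha'
        rcases eq_or_ne c 0 with rfl | hc
        · have : q ∈ Q ⊓ L := ⟨hq, by simpa using hyL⟩
          rw [hQL] at this
          simpa using this
        · exfalso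
          apply hxL
          have h1 : q + c • x - q ∈ Q ⊔ L :=
            Submodule.sub_mem _ (Submodule.mem_sup_right hyL) (Submodule.mem_sup_left hq)
          have h2 : c • x ∈ Q ⊔ L := by simpa using h1
          have := Submodule.smul_mem (Q ⊔ L) c⁻¹ h2
          rwa [smul_smul, inv_mul_cancel₀ hc, one_smul] at this
      · -- transversal to L₀
        rw [eq_bot_iff]
        rintro y ⟨hyQ', hyL⟩
        obtain ⟨q, hq, a', ha', rfl⟩ := Submodule.mem_sup.mp hyQ'
        obtain ⟨c, rfl⟩ := Submodule.mem_span_singleton.mp ha'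
        rcases eq_or_ne c 0 with rfl | hc
        · have : q ∈ Q ⊓ L₀ := ⟨hq, by simpa using hyL⟩
          rw [hQL₀] at this
          simpa using this
        · exfalso
          apply hxL₀
          have h1 : q + c • x - q ∈ Q ⊔ L₀ :=
            Submodule.sub_mem _ (Submodule.mem_sup_right hyL) (Submodule.mem_sup_left hq)
          have h2 : c • x ∈ Q ⊔ L₀ := by simpa using h1
          have := Submodule.smul_mem (Q ⊔ L₀) c⁻¹ h2
          rwa [smul_smul, inv_mul_cancel₀ hc, one_smul] at this
  obtain ⟨Q, h1, h2, h3, h4⟩ := key n le_rfl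
  exact ⟨Q, ⟨h1, h2⟩, h3, h4⟩
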